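/- There exists a universal constant C > 0 such that the following holds. For every ε ∈ (0, 1/32) and every process on I_ε whose initial configuration satisfies Σ_{i ∈ I_ε} p_i^1 = 1, for t = ⌈C · B_ε³⌉ one has Σ_{i ∈ I_ε⁺} p_i^t ≤ 64 · ε · B_ε³. -/

import Mathlib

/-- `B_ε := 2⌈log₂(1/ε)⌉ + 1`. -/
noncomputable def Bval (ε : ℝ) : ℤ := 2 * ⌈Real.logb 2 (1 / ε)⌉ + 1

/-- `I_ε`: the odd integers `i` with `-B_ε ≤ i ≤ B_ε`. -/
noncomputable def Iset (ε : ℝ) : Finset ℤ :=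
  (Finset.Icc (-(Bval ε)) (Bval ε)).filter (fun i => Odd i)

/-- `I_ε⁺ := I_ε ∩ {i > 0}`. -/
noncomputable def Ipos (ε : ℝ) : Finset ℤ := (Iset ε).filter (fun i => 0 < i)

/-- `I_ε⁻ := I_ε ∩ {i < 0}`. -/
noncomputable def Ineg (ε : ℝ) : Finset ℤ := (Iset ε).filter (fun i => i < 0)

/-- A process on `I_ε` (Definition 4 of the paper): at each step `t ≥ 1` and each `i ∈ I_ε`,
an amount `q t i` with `0 ≤ q t i ≤ p t i` of the weight `p t i` moves to position `i - 2`
and the remaining `p t i - q t i` moves to position `i + 2`, clamped to stay in `[-B_ε, B_ε]`;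
`p (t+1) i` is the total weight arriving at `i`.  Moreover:
(i) at every step at least `15/16` of the mass on `I_ε⁺` moves down, and
(ii) for every `i ∈ I_ε⁻` whose mass is at least `(1/B_ε⁴) Σ_{j ∈ I_ε⁺} p t j`,
at most `1/16` of the weight at `i` moves up. -/
structure MProcess (ε : ℝ) where
  p : ℕ → ℤ → ℝ
  q : ℕ → ℤ → ℝ
  q_nonneg : ∀ t i, 0 ≤ q t i
  q_le_p : ∀ t i, q t i ≤ p t i
  update : ∀ t, 1 ≤ t → ∀ i ∈ Iset ε,
    p (t + 1) i =
      (∑ j ∈ (Iset ε).filter (fun j => max (j - 2) (-(Bval ε)) = i), q t j) +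
      (∑ j ∈ (Iset ε).filter (fun j => min (j + 2) (Bval ε) = i), (p t j - q t j))
  mass_down : ∀ t, 1 ≤ t →
    (15 / 16 : ℝ) * ∑ i ∈ Ipos ε, p t i ≤ ∑ i ∈ Ipos ε, q t i
  up_small : ∀ t, 1 ≤ t → ∀ i ∈ Ineg ε,
    (1 / (Bval ε : ℝ) ^ 4) * (∑ j ∈ Ipos ε, p t j) ≤ p t i →
    p t i - q t i ≤ (1 / 16 : ℝ) * p t i

/-- `W_t := Σ_{i ∈ I_ε⁻} 2^i p_i^t + Σ_{i ∈ I_ε⁺} p_i^t`. -/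
noncomputable def Wfun (ε : ℝ) (P : MProcess ε) (t : ℕ) : ℝ :=
  (∑ i ∈ Ineg ε, (2 : ℝ) ^ i * P.p t i) + ∑ i ∈ Ipos ε, P.p t i

namespace Stmt0Proof

/-- The potential coefficients. -/
noncomputable def coefA (ε : ℝ) (i : ℤ) : ℝ :=
  if 0 < i then 1 + (i : ℝ) / (2 * (Bval ε : ℝ)) else (2 : ℝ) ^ i

/-- The potential function. -/
noncomputable def PsiA (ε : ℝ) (P : MProcess ε) (t : ℕ) : ℝ :=
  ∑ i ∈ Iset ε, coefA ε i * P.p t i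

lemma Bval_odd (ε : ℝ) : Odd (Bval ε) := odd_two_mul_add_one _

lemma Bval_ge (ε : ℝ) (hε : ε ∈ Set.Ioo (0:ℝ) (1/32)) : 11 ≤ Bval ε := by
  obtain ⟨h0, h1⟩ := hε
  have h32 : (32:ℝ) < 1/ε := by rw [lt_div_iff₀ h0]; nlinarith
  have h5 : (5:ℝ) < Real.logb 2 (1/ε) := by
    rw [Real.lt_logb_iff_rpow_lt one_lt_two (by positivity)]
    rw [show ((5:ℝ) = ((5:ℕ):ℝ)) by norm_num, Real.rpow_natCast]
    norm_num at h32 ⊢; linarith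
  have h5' : (5:ℝ) < (⌈Real.logb 2 (1/ε)⌉ : ℝ) := lt_of_lt_of_le h5 (Int.le_ceil _)
  have : (5:ℤ) < ⌈Real.logb 2 (1/ε)⌉ := by exact_mod_cast h5'
  unfold Bval; omega

lemma mem_Iset (ε : ℝ) (i : ℤ) :
    i ∈ Iset ε ↔ (-(Bval ε) ≤ i ∧ i ≤ Bval ε) ∧ Odd i := by
  simp [Iset, Finset.mem_filter, Finset.mem_Icc]

lemma mem_Ipos (ε : ℝ) (i : ℤ) :
    i ∈ Ipos ε ↔ ((-(Bval ε) ≤ i ∧ i ≤ Bval ε) ∧ Odd i) ∧ 0 < i := by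
  simp [Ipos, Finset.mem_filter, mem_Iset]

lemma mem_Ineg (ε : ℝ) (i : ℤ) :
    i ∈ Ineg ε ↔ ((-(Bval ε) ≤ i ∧ i ≤ Bval ε) ∧ Odd i) ∧ i < 0 := by
  simp [Ineg, Finset.mem_filter, mem_Iset]

section

variable {ε : ℝ} (hB : 11 ≤ Bval ε)

include hB

lemma dmap_mem {j : ℤ} (hj : j ∈ Iset ε) : max (j - 2) (-(Bval ε)) ∈ Iset ε := by
  rw [mem_Iset] at hj ⊢
  obtain ⟨⟨h1, h2⟩, h3⟩ := hj
  refine ⟨⟨le_max_right _ _, ?_⟩, ?_⟩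
  · exact max_le (by omega) (by omega)
  · rcases max_choice (j - 2) (-(Bval ε)) with h | h <;> rw [h]
    · rw [Int.odd_iff] at h3 ⊢; omega
    · exact (Bval_odd ε).neg

lemma umap_mem {j : ℤ} (hj : j ∈ Iset ε) : min (j + 2) (Bval ε) ∈ Iset ε := by
  rw [mem_Iset] at hj ⊢
  obtain ⟨⟨h1, h2⟩, h3⟩ := hj
  refine ⟨⟨le_min (by omega) (by omega), min_le_right _ _⟩, ?_⟩
  rcases min_choice (j + 2) (Bval ε) with h | h <;> rw [h]
  · rw [Int.odd_iff] at h3 ⊢; omega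
  · exact Bval_odd ε

/-- Expansion of a weighted sum after one step. -/
lemma expand (P : MProcess ε) (t : ℕ) (ht : 1 ≤ t) (f : ℤ → ℝ) :
    ∑ i ∈ Iset ε, f i * P.p (t+1) i
      = ∑ j ∈ Iset ε, (f (max (j - 2) (-(Bval ε))) * P.q t j
          + f (min (j + 2) (Bval ε)) * (P.p t j - P.q t j)) := by
  have step1 : ∑ i ∈ Iset ε, f i * P.p (t+1) i
      = ∑ i ∈ Iset ε,
          ((∑ j ∈ (Iset ε).filter (fun j => max (j - 2) (-(Bval ε)) = i),
              f (max (j - 2) (-(Bval ε))) * P.q t j)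
          + (∑ j ∈ (Iset ε).filter (fun j => min (j + 2) (Bval ε) = i),
              f (min (j + 2) (Bval ε)) * (P.p t j - P.q t j))) := by
    refine Finset.sum_congr rfl fun i hi => ?_
    rw [P.update t ht i hi, mul_add, Finset.mul_sum, Finset.mul_sum]
    congr 1
    · exact Finset.sum_congr rfl fun j hj => by
        rw [(Finset.mem_filter.mp hj).2]
    · exact Finset.sum_congr rfl fun j hj => by
        rw [(Finset.mem_filter.mp hj).2]
  rw [step1, Finset.sum_add_distrib,
    Finset.sum_fiberwise_of_maps_to (fun j hj => dmap_mem hB hj),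
    Finset.sum_fiberwise_of_maps_to (fun j hj => umap_mem hB hj),
    ← Finset.sum_add_distrib]

lemma p_nonneg (P : MProcess ε) (t : ℕ) (i : ℤ) : 0 ≤ P.p t i :=
  le_trans (P.q_nonneg t i) (P.q_le_p t i)

/-- Mass conservation. -/
lemma mass_conserved (P : MProcess ε) (hm : ∑ i ∈ Iset ε, P.p 1 i = 1) :
    ∀ t, 1 ≤ t → ∑ i ∈ Iset ε, P.p t i = 1 := by
  intro t ht
  induction t, ht using Nat.le_induction with
  | base => exact hm
  | succ t ht ih =>
    have h := expand hB P t ht (fun _ => 1)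
    simp only [one_mul] at h
    rw [h, ← ih]
    exact Finset.sum_congr rfl fun j _ => by ring

/-- Splitting a sum over `Iset` into negative and positive parts. -/
lemma split_sum (g : ℤ → ℝ) :
    ∑ i ∈ Iset ε, g i = (∑ i ∈ Ineg ε, g i) + ∑ i ∈ Ipos ε, g i := by
  rw [← Finset.sum_filter_add_sum_filter_not (Iset ε) (fun i => i < 0) g]
  congr 1
  apply Finset.sum_congr _ (fun _ _ => rfl)
  apply Finset.filter_congr
  intro i hi
  rw [mem_Iset] at hi
  have : i ≠ 0 := by
    rintro rfl
    exact (Int.not_odd_iff_even.mpr Even.zero) hi.2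
  simp only [not_lt]
  constructor <;> intro h <;> omega


lemma bR (hε : True) : True := trivial

omit hB in
lemma coefA_eq_pos {i : ℤ} (hi : 0 < i) : coefA ε i = 1 + (i : ℝ) / (2 * (Bval ε : ℝ)) :=
  if_pos hi

omit hB in
lemma coefA_eq_neg {i : ℤ} (hi : ¬ 0 < i) : coefA ε i = (2:ℝ) ^ i := if_neg hi

lemma coefA_u_pos {j : ℤ} (hj : j ∈ Ipos ε) :
    coefA ε (min (j + 2) (Bval ε)) ≤ coefA ε j + 1 / (Bval ε : ℝ) := by
  rw [mem_Ipos] at hj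
  obtain ⟨⟨⟨h1, h2⟩, h3⟩, h4⟩ := hj
  have hb : (11:ℝ) ≤ (Bval ε : ℝ) := by exact_mod_cast hB
  have hb0 : (0:ℝ) < 2 * (Bval ε : ℝ) := by linarith
  have hu : (0:ℤ) < min (j + 2) (Bval ε) := lt_min (by omega) (by omega)
  rw [coefA_eq_pos hu, coefA_eq_pos h4]
  have hm : ((min (j + 2) (Bval ε) : ℤ) : ℝ) ≤ (j : ℝ) + 2 := by
    have : min (j + 2) (Bval ε) ≤ j + 2 := min_le_left _ _
    exact_mod_cast this
  have h5 : ((min (j + 2) (Bval ε) : ℤ) : ℝ) / (2 * (Bval ε : ℝ)) ≤ ((j:ℝ) + 2) / (2 * (Bval ε : ℝ)) :=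
    div_le_div_of_nonneg_right hm hb0.le
  have h6 : ((j:ℝ) + 2) / (2 * (Bval ε : ℝ)) = (j:ℝ) / (2 * (Bval ε : ℝ)) + 1 / (Bval ε : ℝ) := by
    field_simp
  linarith

lemma coefA_d_pos {j : ℤ} (hj : j ∈ Ipos ε) :
    coefA ε (max (j - 2) (-(Bval ε))) ≤ coefA ε j - 1 / (Bval ε : ℝ) := by
  rw [mem_Ipos] at hj
  obtain ⟨⟨⟨h1, h2⟩, h3⟩, h4⟩ := hj
  have hb : (11:ℝ) ≤ (Bval ε : ℝ) := by exact_mod_cast hB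
  rw [Int.odd_iff] at h3
  rcases (by omega : j = 1 ∨ 3 ≤ j) with rfl | h5
  · have hd : max (1 - 2 : ℤ) (-(Bval ε)) = -1 := max_eq_left (by omega)
    rw [hd, coefA_eq_neg (by norm_num), coefA_eq_pos (by norm_num)]
    have he : (2:ℝ) ^ (-1 : ℤ) = 1/2 := by norm_num
    have h7 : 1 / (Bval ε : ℝ) ≤ 1/11 := by
      apply div_le_div_of_nonneg_left one_pos.le (by norm_num) hb
    have h8 : 0 ≤ ((1:ℤ):ℝ) / (2 * (Bval ε : ℝ)) := by positivity
    rw [he]; push_cast at h8 ⊢; linarith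
  · have hd : max (j - 2 : ℤ) (-(Bval ε)) = j - 2 := max_eq_left (by omega)
    rw [hd, coefA_eq_pos (by omega), coefA_eq_pos h4]
    have hb0 : (Bval ε : ℝ) ≠ 0 := by linarith
    have key : ((j:ℝ) - 2)/(2*(Bval ε : ℝ)) = (j:ℝ)/(2*(Bval ε : ℝ)) - 1/(Bval ε : ℝ) := by
      field_simp
    push_cast
    linarith [key]

lemma coefA_d_neg {j : ℤ} (hj : j ∈ Ineg ε) :
    coefA ε (max (j - 2) (-(Bval ε))) ≤ (2:ℝ) ^ j := by
  rw [mem_Ineg] at hj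
  obtain ⟨⟨⟨h1, h2⟩, h3⟩, h4⟩ := hj
  rw [coefA_eq_neg (by omega)]
  exact zpow_le_zpow_right₀ one_le_two (by omega)

lemma coefA_d_neg' {j : ℤ} (hj : j ∈ Ineg ε) (hjB : j ≠ -(Bval ε)) :
    coefA ε (max (j - 2) (-(Bval ε))) ≤ (1/4) * (2:ℝ) ^ j := by
  rw [mem_Ineg] at hj
  obtain ⟨⟨⟨h1, h2⟩, h3⟩, h4⟩ := hj
  have h3' := h3
  rw [Int.odd_iff] at h3'
  have hBo := Bval_odd ε
  rw [Int.odd_iff] at hBo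
  have hd : max (j - 2 : ℤ) (-(Bval ε)) = j - 2 := max_eq_left (by omega)
  rw [hd, coefA_eq_neg (by omega), zpow_sub₀ (two_ne_zero)]
  norm_num
  rw [div_eq_mul_inv, mul_comm]
  norm_num

lemma coefA_u_neg {j : ℤ} (hj : j ∈ Ineg ε) :
    coefA ε (min (j + 2) (Bval ε)) ≤ 4 * (2:ℝ) ^ j := by
  rw [mem_Ineg] at hj
  obtain ⟨⟨⟨h1, h2⟩, h3⟩, h4⟩ := hj
  have h3' := h3
  rw [Int.odd_iff] at h3'
  have hb : (11:ℝ) ≤ (Bval ε : ℝ) := by exact_mod_cast hB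
  rcases (by omega : j = -1 ∨ j ≤ -3) with rfl | h5
  · have hu : min (-1 + 2 : ℤ) (Bval ε) = 1 := min_eq_left (by omega)
    rw [hu, coefA_eq_pos one_pos]
    have h7 : ((1:ℤ):ℝ) / (2 * (Bval ε : ℝ)) ≤ 1 := by
      rw [div_le_one (by linarith)]; push_cast; linarith
    have : (4:ℝ) * (2:ℝ)^(-1:ℤ) = 2 := by norm_num
    rw [this]; push_cast at h7 ⊢; linarith
  · have hu : min (j + 2 : ℤ) (Bval ε) = j + 2 := min_eq_left (by omega)
    rw [hu, coefA_eq_neg (by omega), zpow_add₀ (two_ne_zero)]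
    norm_num; ring_nf
    exact le_refl _

lemma pos_bound (P : MProcess ε) (t : ℕ) (ht : 1 ≤ t) :
    ∑ j ∈ Ipos ε, (coefA ε (max (j - 2) (-(Bval ε))) * P.q t j
        + coefA ε (min (j + 2) (Bval ε)) * (P.p t j - P.q t j))
      ≤ (∑ j ∈ Ipos ε, coefA ε j * P.p t j)
        - (7/8) * (1/(Bval ε : ℝ)) * ∑ j ∈ Ipos ε, P.p t j := by
  have hb : (11:ℝ) ≤ (Bval ε : ℝ) := by exact_mod_cast hB
  have hb0 : (0:ℝ) < (Bval ε : ℝ) := by linarith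
  have h1 : ∀ j ∈ Ipos ε,
      coefA ε (max (j - 2) (-(Bval ε))) * P.q t j
        + coefA ε (min (j + 2) (Bval ε)) * (P.p t j - P.q t j)
      ≤ coefA ε j * P.p t j + (1/(Bval ε : ℝ)) * (P.p t j - 2 * P.q t j) := by
    intro j hj
    have hq0 := P.q_nonneg t j
    have hpq := P.q_le_p t j
    have hd := coefA_d_pos hB hj
    have hu := coefA_u_pos hB hj
    nlinarith [mul_le_mul_of_nonneg_right hd hq0,
      mul_le_mul_of_nonneg_right hu (by linarith : (0:ℝ) ≤ P.p t j - P.q t j)]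
  calc ∑ j ∈ Ipos ε, (coefA ε (max (j - 2) (-(Bval ε))) * P.q t j
        + coefA ε (min (j + 2) (Bval ε)) * (P.p t j - P.q t j))
      ≤ ∑ j ∈ Ipos ε, (coefA ε j * P.p t j
          + (1/(Bval ε : ℝ)) * (P.p t j - 2 * P.q t j)) := Finset.sum_le_sum h1
    _ = (∑ j ∈ Ipos ε, coefA ε j * P.p t j)
        + (1/(Bval ε : ℝ)) * ((∑ j ∈ Ipos ε, P.p t j) - 2 * ∑ j ∈ Ipos ε, P.q t j) := by
        rw [Finset.sum_add_distrib, ← Finset.mul_sum, Finset.sum_sub_distrib, ← Finset.mul_sum]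
    _ ≤ _ := by
        have hmd := P.mass_down t ht
        have h2 : (∑ j ∈ Ipos ε, P.p t j) - 2 * ∑ j ∈ Ipos ε, P.q t j
            ≤ -(7/8) * ∑ j ∈ Ipos ε, P.p t j := by linarith
        have h3 := mul_le_mul_of_nonneg_left h2
          (le_of_lt (by positivity : (0:ℝ) < 1/(Bval ε : ℝ)))
        have h5 : (1/(Bval ε : ℝ)) * (-(7/8) * ∑ j ∈ Ipos ε, P.p t j)
            = -((7/8) * (1/(Bval ε : ℝ)) * ∑ j ∈ Ipos ε, P.p t j) := by
          ring
        linarith [h3, h5.le, h5.ge]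

lemma neg_bound (P : MProcess ε) (t : ℕ) (ht : 1 ≤ t)
    (hm : ∑ i ∈ Iset ε, P.p t i = 1) :
    ∑ j ∈ Ineg ε, (coefA ε (max (j - 2) (-(Bval ε))) * P.q t j
        + coefA ε (min (j + 2) (Bval ε)) * (P.p t j - P.q t j))
      ≤ (1/2) * (∑ j ∈ Ineg ε, (2:ℝ) ^ j * P.p t j)
        + 2 * (Bval ε : ℝ) * ((1/(Bval ε : ℝ)^4) * ∑ j ∈ Ipos ε, P.p t j)
        + (2:ℝ) ^ (-(Bval ε)) := by
  have hb : (11:ℝ) ≤ (Bval ε : ℝ) := by exact_mod_cast hB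
  have hb0 : (0:ℝ) < (Bval ε : ℝ) := by linarith
  have hS0 : 0 ≤ ∑ j ∈ Ipos ε, P.p t j :=
    Finset.sum_nonneg fun j _ => p_nonneg hB P t j
  have hX0 : (0:ℝ) ≤ (1/(Bval ε : ℝ)^4) * ∑ j ∈ Ipos ε, P.p t j := by positivity
  have hmB : -(Bval ε) ∈ Iset ε := by
    rw [mem_Iset]
    exact ⟨⟨le_refl _, by omega⟩, (Bval_odd ε).neg⟩
  have hmBneg : -(Bval ε) ∈ Ineg ε := by
    rw [mem_Ineg]
    exact ⟨⟨⟨le_refl _, by omega⟩, (Bval_odd ε).neg⟩, by omega⟩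
  have hpB1 : P.p t (-(Bval ε)) ≤ 1 := by
    rw [← hm]
    exact Finset.single_le_sum (fun i _ => p_nonneg hB P t i) hmB
  have hpB0 : 0 ≤ P.p t (-(Bval ε)) := p_nonneg hB P t _
  have h1 : ∀ j ∈ Ineg ε,
      coefA ε (max (j - 2) (-(Bval ε))) * P.q t j
        + coefA ε (min (j + 2) (Bval ε)) * (P.p t j - P.q t j)
      ≤ (1/2) * (2:ℝ)^j * P.p t j
          + 2 * ((1/(Bval ε : ℝ)^4) * ∑ i ∈ Ipos ε, P.p t i)
          + (if j = -(Bval ε) then (3/4) * (2:ℝ)^j * P.p t j else 0) := by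
    intro j hj
    have hjm := hj
    rw [mem_Ineg] at hjm
    obtain ⟨⟨⟨hj1, hj2⟩, hj3⟩, hj4⟩ := hjm
    have hq0 := P.q_nonneg t j
    have hpq := P.q_le_p t j
    have hp0 : 0 ≤ P.p t j := le_trans hq0 hpq
    have h2j : (0:ℝ) < (2:ℝ) ^ j := by positivity
    have hdle := coefA_d_neg hB hj
    have hule := coefA_u_neg hB hj
    by_cases hlarge : (1/(Bval ε : ℝ)^4) * (∑ i ∈ Ipos ε, P.p t i) ≤ P.p t j
    · have hup := P.up_small t ht j hj hlarge
      by_cases hjB : j = -(Bval ε)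
      · rw [if_pos hjB]
        nlinarith [mul_le_mul_of_nonneg_right hdle hq0,
          mul_le_mul_of_nonneg_right hule (by linarith : (0:ℝ) ≤ P.p t j - P.q t j),
          mul_le_mul_of_nonneg_left hpq h2j.le,
          mul_le_mul_of_nonneg_left hup (by positivity : (0:ℝ) ≤ 4 * (2:ℝ)^j)]
      · rw [if_neg hjB]
        have hd4 := coefA_d_neg' hB hj hjB
        nlinarith [mul_le_mul_of_nonneg_right hd4 hq0,
          mul_le_mul_of_nonneg_right hule (by linarith : (0:ℝ) ≤ P.p t j - P.q t j),
          mul_le_mul_of_nonneg_left hpq (by positivity : (0:ℝ) ≤ (1/4) * (2:ℝ)^j),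
          mul_le_mul_of_nonneg_left hup (by positivity : (0:ℝ) ≤ 4 * (2:ℝ)^j)]
    · push_neg at hlarge
      have h2j' : (2:ℝ) ^ j ≤ 1/2 := by
        calc (2:ℝ)^j ≤ (2:ℝ)^(-1:ℤ) := zpow_le_zpow_right₀ one_le_two (by omega)
          _ = 1/2 := by norm_num
      split_ifs with h
      all_goals nlinarith [mul_le_mul_of_nonneg_right hdle hq0,
        mul_le_mul_of_nonneg_right hule (by linarith : (0:ℝ) ≤ P.p t j - P.q t j),
        mul_le_mul_of_nonneg_right h2j' hp0, hlarge.le, hX0,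
        mul_nonneg h2j.le hp0, mul_nonneg h2j.le hq0]
  have hcard : ((Ineg ε).card : ℝ) ≤ (Bval ε : ℝ) := by
    have hsub : Ineg ε ⊆ Finset.Icc (-(Bval ε)) (-1) := by
      intro j hj
      rw [mem_Ineg] at hj
      rw [Finset.mem_Icc]
      omega
    have hc := Finset.card_le_card hsub
    rw [Int.card_Icc] at hc
    have : ((-1 + 1 - -(Bval ε)).toNat : ℤ) = Bval ε := by omega
    have hc' : ((Ineg ε).card : ℤ) ≤ Bval ε := by omega
    exact_mod_cast hc'
  have h2B : (0:ℝ) < (2:ℝ) ^ (-(Bval ε)) := by positivity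
  calc ∑ j ∈ Ineg ε, (coefA ε (max (j - 2) (-(Bval ε))) * P.q t j
        + coefA ε (min (j + 2) (Bval ε)) * (P.p t j - P.q t j))
      ≤ ∑ j ∈ Ineg ε, ((1/2) * (2:ℝ)^j * P.p t j
          + 2 * ((1/(Bval ε : ℝ)^4) * ∑ i ∈ Ipos ε, P.p t i)
          + (if j = -(Bval ε) then (3/4) * (2:ℝ)^j * P.p t j else 0)) :=
        Finset.sum_le_sum h1
    _ = (∑ j ∈ Ineg ε, (1/2) * (2:ℝ)^j * P.p t j)
        + ((Ineg ε).card : ℝ) * (2 * ((1/(Bval ε : ℝ)^4) * ∑ i ∈ Ipos ε, P.p t i))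
        + (3/4) * (2:ℝ)^(-(Bval ε)) * P.p t (-(Bval ε)) := by
        rw [Finset.sum_add_distrib, Finset.sum_add_distrib, Finset.sum_const,
          nsmul_eq_mul, Finset.sum_ite_eq' (Ineg ε) (-(Bval ε)), if_pos hmBneg]
    _ ≤ _ := by
        have e1 : ∑ j ∈ Ineg ε, (1/2) * (2:ℝ)^j * P.p t j
            = (1/2) * ∑ j ∈ Ineg ε, (2:ℝ)^j * P.p t j := by
          rw [Finset.mul_sum]; exact Finset.sum_congr rfl fun j _ => by ring
        rw [e1]
        have h4 : ((Ineg ε).card : ℝ) * (2 * ((1/(Bval ε : ℝ)^4) * ∑ i ∈ Ipos ε, P.p t i))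
            ≤ (Bval ε : ℝ) * (2 * ((1/(Bval ε : ℝ)^4) * ∑ i ∈ Ipos ε, P.p t i)) :=
          mul_le_mul_of_nonneg_right hcard (by positivity)
        nlinarith [h4, h2B, hpB0, hpB1]

lemma coefA_ge_one {j : ℤ} (hj : j ∈ Ipos ε) : 1 ≤ coefA ε j := by
  rw [mem_Ipos] at hj
  obtain ⟨⟨⟨h1, h2⟩, h3⟩, h4⟩ := hj
  have hb : (11:ℝ) ≤ (Bval ε : ℝ) := by exact_mod_cast hB
  rw [coefA_eq_pos h4]
  have hj0 : (0:ℝ) ≤ (j:ℝ) := by exact_mod_cast h4.le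
  have : (0:ℝ) ≤ (j:ℝ) / (2 * (Bval ε : ℝ)) := by positivity
  linarith

lemma coefA_le_three_half {j : ℤ} (hj : j ∈ Iset ε) : coefA ε j ≤ 3/2 := by
  rw [mem_Iset] at hj
  obtain ⟨⟨h1, h2⟩, h3⟩ := hj
  have hb : (11:ℝ) ≤ (Bval ε : ℝ) := by exact_mod_cast hB
  by_cases h4 : 0 < j
  · rw [coefA_eq_pos h4]
    have hj2 : (j:ℝ) ≤ (Bval ε : ℝ) := by exact_mod_cast h2
    have h5 : (j:ℝ) / (2 * (Bval ε : ℝ)) ≤ (Bval ε : ℝ) / (2 * (Bval ε : ℝ)) :=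
      div_le_div_of_nonneg_right hj2 (by linarith)
    have h6 : (Bval ε : ℝ) / (2 * (Bval ε : ℝ)) = 1/2 := by
      field_simp
    linarith
  · rw [coefA_eq_neg h4]
    have := zpow_le_one_of_nonpos₀ (one_le_two (α := ℝ)) (by omega : j ≤ 0)
    linarith

lemma coefA_nonneg (j : ℤ) : 0 ≤ coefA ε j := by
  have hb : (11:ℝ) ≤ (Bval ε : ℝ) := by exact_mod_cast hB
  by_cases h4 : 0 < j
  · rw [coefA_eq_pos h4]
    have hj0 : (0:ℝ) ≤ (j:ℝ) := by exact_mod_cast h4.le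
    have : (0:ℝ) ≤ (j:ℝ) / (2 * (Bval ε : ℝ)) := by positivity
    linarith
  · rw [coefA_eq_neg h4]; positivity

lemma S_le_psi (P : MProcess ε) (t : ℕ) :
    ∑ j ∈ Ipos ε, P.p t j ≤ PsiA ε P t := by
  rw [PsiA, split_sum hB (fun i => coefA ε i * P.p t i)]
  have h1 : ∑ j ∈ Ipos ε, P.p t j ≤ ∑ j ∈ Ipos ε, coefA ε j * P.p t j :=
    Finset.sum_le_sum fun j hj => by
      have h2 := coefA_ge_one hB hj
      have h3 := p_nonneg hB P t j
      nlinarith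
  have h2 : 0 ≤ ∑ j ∈ Ineg ε, coefA ε j * P.p t j :=
    Finset.sum_nonneg fun j _ => mul_nonneg (coefA_nonneg hB j) (p_nonneg hB P t j)
  linarith

lemma step (P : MProcess ε) (t : ℕ) (ht : 1 ≤ t)
    (hm : ∑ i ∈ Iset ε, P.p t i = 1) :
    PsiA ε P (t+1) ≤ (1 - (1/3) * (1/(Bval ε : ℝ))) * PsiA ε P t + (2:ℝ)^(-(Bval ε)) := by
  have hb : (11:ℝ) ≤ (Bval ε : ℝ) := by exact_mod_cast hB
  have hb0 : (0:ℝ) < (Bval ε : ℝ) := by linarith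
  have hexp := expand hB P t ht (coefA ε)
  have hsplit := split_sum hB (fun j => coefA ε (max (j - 2) (-(Bval ε))) * P.q t j
      + coefA ε (min (j + 2) (Bval ε)) * (P.p t j - P.q t j))
  have hPsiT : PsiA ε P t = (∑ j ∈ Ineg ε, (2:ℝ)^j * P.p t j)
      + ∑ j ∈ Ipos ε, coefA ε j * P.p t j := by
    rw [PsiA, split_sum hB (fun i => coefA ε i * P.p t i)]
    congr 1
    exact Finset.sum_congr rfl fun j hj => by
      rw [mem_Ineg] at hj
      rw [coefA_eq_neg (by omega)]
  have h1 := pos_bound hB P t ht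
  have h2 := neg_bound hB P t ht hm
  have e2 : 2 * (Bval ε : ℝ) * ((1/(Bval ε : ℝ)^4) * ∑ j ∈ Ipos ε, P.p t j)
      = 2 * (1/(Bval ε : ℝ))^3 * ∑ j ∈ Ipos ε, P.p t j := by
    field_simp
  rw [e2] at h2
  have hN0 : 0 ≤ ∑ j ∈ Ineg ε, (2:ℝ)^j * P.p t j :=
    Finset.sum_nonneg fun j _ => mul_nonneg (by positivity) (p_nonneg hB P t j)
  have hS0 : 0 ≤ ∑ j ∈ Ipos ε, P.p t j :=
    Finset.sum_nonneg fun j _ => p_nonneg hB P t j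
  have hPP0 : 0 ≤ ∑ j ∈ Ipos ε, coefA ε j * P.p t j :=
    Finset.sum_nonneg fun j _ => mul_nonneg (coefA_nonneg hB j) (p_nonneg hB P t j)
  have hPPS : ∑ j ∈ Ipos ε, coefA ε j * P.p t j ≤ (3/2) * ∑ j ∈ Ipos ε, P.p t j := by
    rw [Finset.mul_sum]
    exact Finset.sum_le_sum fun j hj =>
      mul_le_mul_of_nonneg_right (coefA_le_three_half hB (Finset.mem_filter.mp hj).1)
        (p_nonneg hB P t j)
  have hδ0 : (0:ℝ) ≤ (2:ℝ)^(-(Bval ε)) := by positivity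
  have hu0 : (0:ℝ) < 1/(Bval ε : ℝ) := by positivity
  have hu11 : 1/(Bval ε : ℝ) ≤ 1/11 := by
    rw [div_le_div_iff₀ hb0 (by norm_num)]; linarith
  have hu2 : (1/(Bval ε : ℝ)) * (1/(Bval ε : ℝ)) ≤ (1/11) * (1/11) :=
    mul_le_mul hu11 hu11 hu0.le (by norm_num)
  have e3 : 2 * (1/(Bval ε : ℝ))^3 * (∑ j ∈ Ipos ε, P.p t j)
      ≤ (2/121) * ((1/(Bval ε : ℝ)) * ∑ j ∈ Ipos ε, P.p t j) := by
    nlinarith [mul_nonneg hu0.le hS0, hu2, hu0.le]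
  have h7 := mul_le_mul_of_nonneg_left hPPS hu0.le
  have h8 := mul_le_mul_of_nonneg_right hu11 hN0
  have h9 : 0 ≤ (1/(Bval ε : ℝ)) * ∑ j ∈ Ipos ε, P.p t j := mul_nonneg hu0.le hS0
  rw [PsiA, hexp, hsplit, hPsiT]
  beta_reduce
  linarith [h1, h2, e3, h7, h8, h9, hN0, hδ0]

lemma psi_bound (P : MProcess ε) (hm1 : ∑ i ∈ Iset ε, P.p 1 i = 1)
    (t : ℕ) (ht : 1 ≤ t) :
    PsiA ε P t ≤ (1 - (1/3) * (1/(Bval ε : ℝ)))^(t-1) * (3/2)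
      + 3*(Bval ε : ℝ)*(2:ℝ)^(-(Bval ε)) := by
  have hb : (11:ℝ) ≤ (Bval ε : ℝ) := by exact_mod_cast hB
  have hb0 : (0:ℝ) < (Bval ε : ℝ) := by linarith
  have hδ0 : (0:ℝ) ≤ (2:ℝ)^(-(Bval ε)) := by positivity
  have hx1 : (1/3) * (1/(Bval ε : ℝ)) ≤ 1/33 := by
    have : 1/(Bval ε : ℝ) ≤ 1/11 := by
      rw [div_le_div_iff₀ hb0 (by norm_num)]; linarith
    linarith
  have hx0 : (0:ℝ) < (1/3) * (1/(Bval ε : ℝ)) := by positivity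
  have hr0 : (0:ℝ) ≤ 1 - (1/3) * (1/(Bval ε : ℝ)) := by linarith
  induction t, ht using Nat.le_induction with
  | base =>
    simp only [Nat.sub_self, pow_zero, one_mul]
    have hψ1 : PsiA ε P 1 ≤ 3/2 := by
      rw [PsiA]
      calc ∑ i ∈ Iset ε, coefA ε i * P.p 1 i
          ≤ ∑ i ∈ Iset ε, (3/2) * P.p 1 i :=
            Finset.sum_le_sum fun i hi =>
              mul_le_mul_of_nonneg_right (coefA_le_three_half hB hi) (p_nonneg hB P 1 i)
        _ = 3/2 := by rw [← Finset.mul_sum, hm1, mul_one]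
    nlinarith
  | succ t ht ih =>
    have hst := step hB P t ht (mass_conserved hB P hm1 t ht)
    have h3 := mul_le_mul_of_nonneg_left ih hr0
    have hpow : (1 - (1/3) * (1/(Bval ε : ℝ)))^t = (1 - (1/3) * (1/(Bval ε : ℝ)))^(t-1)
        * (1 - (1/3) * (1/(Bval ε : ℝ))) := by
      conv_lhs => rw [show t = (t-1)+1 by omega]
      rw [pow_succ]
    have e2 : (1 - (1/3) * (1/(Bval ε : ℝ))) * (3*(Bval ε : ℝ)*(2:ℝ)^(-(Bval ε)))
        + (2:ℝ)^(-(Bval ε)) = 3*(Bval ε : ℝ)*(2:ℝ)^(-(Bval ε)) := by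
      field_simp; ring
    simp only [Nat.add_sub_cancel]
    calc PsiA ε P (t+1) ≤ (1 - (1/3) * (1/(Bval ε : ℝ))) * PsiA ε P t + (2:ℝ)^(-(Bval ε)) := hst
      _ ≤ (1 - (1/3) * (1/(Bval ε : ℝ))) * ((1 - (1/3) * (1/(Bval ε : ℝ)))^(t-1) * (3/2)
            + 3*(Bval ε : ℝ)*(2:ℝ)^(-(Bval ε))) + (2:ℝ)^(-(Bval ε)) := by linarith
      _ = (1 - (1/3) * (1/(Bval ε : ℝ)))^t * (3/2)
            + ((1 - (1/3) * (1/(Bval ε : ℝ))) * (3*(Bval ε : ℝ)*(2:ℝ)^(-(Bval ε)))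
              + (2:ℝ)^(-(Bval ε))) := by rw [hpow]; ring
      _ = (1 - (1/3) * (1/(Bval ε : ℝ)))^t * (3/2) + 3*(Bval ε : ℝ)*(2:ℝ)^(-(Bval ε)) := by
            rw [e2]

end

end Stmt0Proof

set_option maxHeartbeats 1600000 in
/-- Lemma 3 of the paper: there is a universal constant `C > 0` such that for
every `ε ∈ (0, 1/32)` and every process on `I_ε` whose initial configuration has total mass `1`,
after `t = ⌈C · B_ε³⌉` steps the mass on `I_ε⁺` is at most `64 · ε · B_ε³`. -/
theorem stmt0 :
    ∃ C : ℝ, 0 < C ∧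
      ∀ ε : ℝ, ε ∈ Set.Ioo (0 : ℝ) (1 / 32) →
        ∀ P : MProcess ε, (∑ i ∈ Iset ε, P.p 1 i) = 1 →
          ∑ i ∈ Ipos ε, P.p (⌈C * (Bval ε : ℝ) ^ 3⌉₊) i ≤ 64 * ε * (Bval ε : ℝ) ^ 3 := by
  refine ⟨1, one_pos, ?_⟩
  intro ε hε P hm1
  obtain ⟨hε0, hε32⟩ := hε
  have hB := Stmt0Proof.Bval_ge ε ⟨hε0, hε32⟩
  have hb : (11:ℝ) ≤ ((Bval ε) : ℝ) := by exact_mod_cast hB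
  have hb0 : (0:ℝ) < ((Bval ε):ℝ) := by linarith
  obtain ⟨n, hBn⟩ : ∃ n : ℕ, (n:ℤ) = Bval ε :=
    ⟨(Bval ε).toNat, Int.toNat_of_nonneg (by omega)⟩
  have hn11 : 11 ≤ n := by omega
  have hnb : ((n:ℕ) : ℝ) = ((Bval ε):ℝ) := by rw [← hBn]; norm_cast
  have e : ((Bval ε : ℝ))^3 = ((n^3 : ℕ) : ℝ) := by push_cast; rw [hnb]
  have hidx : ⌈(1:ℝ) * ((Bval ε):ℝ)^3⌉₊ = n^3 := by rw [one_mul, e, Nat.ceil_natCast]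
  rw [hidx]
  have hT1 : 1 ≤ n^3 := Nat.one_le_pow _ _ (by omega)
  set x : ℝ := (1/3) * (1/((Bval ε):ℝ)) with hx
  have hψ := Stmt0Proof.psi_bound hB P hm1 (n^3) hT1
  rw [← hx] at hψ
  have hS := Stmt0Proof.S_le_psi hB P (n^3)
  have hx0 : (0:ℝ) < x := by rw [hx]; positivity
  have hx1 : x ≤ 1/33 := by
    have h11 : 1/((Bval ε):ℝ) ≤ 1/11 := by rw [div_le_div_iff₀ hb0 (by norm_num)]; linarith
    rw [hx]; linarith
  have hr0 : (0:ℝ) ≤ 1 - x := by linarith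
  have hr1 : 1 - x ≤ 1 := by linarith
  have hmx : ((3*n : ℕ):ℝ) * x = 1 := by
    push_cast
    rw [hnb, hx]
    field_simp
  have hbern : (2:ℝ) ≤ (1 + x)^(3*n) := by
    have h := one_add_mul_le_pow (a := x) (by linarith) (3*n)
    rw [hmx] at h
    norm_num at h
    exact h
  have hprod : (1 + x)^(3*n) * (1 - x)^(3*n) ≤ 1 := by
    rw [← mul_pow]
    have e5 : (1 + x) * (1 - x) = 1 - x^2 := by ring
    rw [e5]
    exact pow_le_one₀ (by nlinarith) (by nlinarith)
  have hrm : (1 - x)^(3*n) ≤ 1/2 := by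
    nlinarith [pow_nonneg hr0 (3*n), hbern, hprod]
  have hTm : 3*n*(n+1) ≤ n^3 - 1 := by
    have h6 : 3*n*(n+1) + 1 ≤ n^3 := by nlinarith
    omega
  have h5 : (1 - x)^(n^3 - 1) ≤ ((2:ℝ)^n)⁻¹ * (1/2) := by
    calc (1 - x)^(n^3 - 1) ≤ (1 - x)^(3*n*(n+1)) := pow_le_pow_of_le_one hr0 hr1 hTm
      _ = ((1 - x)^(3*n))^(n+1) := by rw [← pow_mul]
      _ ≤ (1/2:ℝ)^(n+1) := pow_le_pow_left₀ (pow_nonneg hr0 _) hrm _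
      _ = ((2:ℝ)^n)⁻¹ * (1/2) := by
          rw [pow_succ]
          congr 1
          rw [one_div, inv_pow]
  have hδe : (2:ℝ)^(-(Bval ε)) = ((2:ℝ)^n)⁻¹ := by
    rw [← hBn, zpow_neg, zpow_natCast]
  rw [hδe] at hψ
  have hc1 : 1/ε ≤ (2:ℝ)^(⌈Real.logb 2 (1/ε)⌉) := by
    have hl : (1/ε : ℝ) = (2:ℝ) ^ (Real.logb 2 (1/ε)) :=
      (Real.rpow_logb two_pos (by norm_num) (by positivity)).symm
    have h2' : (2:ℝ) ^ (Real.logb 2 (1/ε)) ≤ (2:ℝ) ^ ((⌈Real.logb 2 (1/ε)⌉:ℤ):ℝ) :=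
      Real.rpow_le_rpow_of_exponent_le one_le_two (Int.le_ceil _)
    rw [Real.rpow_intCast] at h2'
    exact hl.le.trans h2'
  have e4 : (2:ℝ)^(n:ℕ) = 2 * ((2:ℝ)^(⌈Real.logb 2 (1/ε)⌉))^2 := by
    have hBe : ((n:ℕ):ℤ) = 2*⌈Real.logb 2 (1/ε)⌉ + 1 := by rw [hBn]; rfl
    rw [← zpow_natCast (2:ℝ) n, hBe, zpow_add₀ (by norm_num : (2:ℝ) ≠ 0), zpow_one,
      two_mul, zpow_add₀ (by norm_num : (2:ℝ) ≠ 0)]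
    ring
  have hεinv : (0:ℝ) < 1/ε := by positivity
  have h2n : 2/ε^2 ≤ (2:ℝ)^(n:ℕ) := by
    rw [e4]
    have h7 : (1/ε)^2 ≤ ((2:ℝ)^(⌈Real.logb 2 (1/ε)⌉))^2 :=
      pow_le_pow_left₀ (le_of_lt hεinv) hc1 2
    have e6 : (1/ε)^2 = 1/ε^2 := by ring
    rw [e6] at h7
    have e7 : 2/ε^2 = 2 * (1/ε^2) := by ring
    rw [e7]
    linarith [h7]
  have hd : ((2:ℝ)^(n:ℕ))⁻¹ ≤ ε^2/2 := by
    have h7 : (0:ℝ) < 2/ε^2 := by positivity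
    calc ((2:ℝ)^(n:ℕ))⁻¹ ≤ (2/ε^2)⁻¹ := by
          exact inv_anti₀ h7 h2n
      _ = ε^2/2 := by rw [inv_div]
  have hfin : ∑ i ∈ Ipos ε, P.p (n^3) i
      ≤ (3/2)*(((2:ℝ)^n)⁻¹*(1/2)) + 3*((Bval ε):ℝ)*((2:ℝ)^n)⁻¹ := by
    linarith [hS, hψ, h5]
  have hdpos : (0:ℝ) ≤ ((2:ℝ)^(n:ℕ))⁻¹ := by positivity
  have hstep1 : (3/2)*(((2:ℝ)^n)⁻¹*(1/2)) + 3*((Bval ε):ℝ)*((2:ℝ)^n)⁻¹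
      ≤ 4*((Bval ε):ℝ)*((2:ℝ)^n)⁻¹ := by
    have h8 : (3/4:ℝ) * ((2:ℝ)^n)⁻¹ ≤ ((Bval ε):ℝ) * ((2:ℝ)^n)⁻¹ :=
      mul_le_mul_of_nonneg_right (by linarith) hdpos
    linarith
  have hstep2 : 4*((Bval ε):ℝ)*((2:ℝ)^n)⁻¹ ≤ 4*((Bval ε):ℝ)*(ε^2/2) := by
    apply mul_le_mul_of_nonneg_left hd (by linarith)
  have hstep3 : 4*((Bval ε):ℝ)*(ε^2/2) ≤ 64 * ε * ((Bval ε):ℝ)^3 := by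
    have h9 : ε^2 ≤ ε := by nlinarith
    have h10 : (0:ℝ) ≤ 2*((Bval ε):ℝ) := by linarith
    have h12 : 2*((Bval ε):ℝ)*ε^2 ≤ 2*((Bval ε):ℝ)*ε := by
      have h15 := mul_le_mul_of_nonneg_left h9 h10
      linarith [h15]
    have h13 : 2*((Bval ε):ℝ)*ε ≤ 64 * ε * ((Bval ε):ℝ)^3 := by
      have h14 : 2*((Bval ε):ℝ) ≤ 64*((Bval ε):ℝ)^3 := by
        have hbb : (121:ℝ) ≤ ((Bval ε):ℝ) * ((Bval ε):ℝ) :=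
          by nlinarith [hb]
        have hbbb := mul_le_mul_of_nonneg_left hbb (by linarith : (0:ℝ) ≤ ((Bval ε):ℝ))
        nlinarith [hbbb, hb]
      have h16 := mul_le_mul_of_nonneg_right h14 hε0.le
      linarith [h16]
    linarith
  linarith
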